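/- Let G be a network with G(l,h) = 0 for distinct agents l, h, let P_h be a perception with P_h(h,k) = G(h,k) for all k, and suppose P_h(l,k) ≠ G(l,k) for at least one k ∉ {l,h} (h misperceives at least one of l's link states with a third party). Let G' be G with the link {l,h} added, let P'_l be agent l's update of P_h (P'_l(j,k) = P_h(j,k) for j,k ≠ l, P'_l(l,k) = G'(l,k)), and let P'_h be P_h with h's own row corrected to G'. Then for every agent i ∉ {l,h} and every perception P_i with P_i(i,k) = G(i,k) for all k and ρ(G,P_i) ≤ ρ(G,P_h), it holds that ρ(G',P'_l) ≥ ρ(G',P_i) and ρ(G',P'_l) ≥ ρ(G',P'_h): after the link and the update, the updating agent attains the maximal accuracy. -/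
import Mathlib

open Finset

/-- Accuracy of perception `P` with respect to network `G` on `n` agents. -/
noncomputable def acc (n : ℕ) (G P : Fin n → Fin n → Bool) : ℝ :=
  (((Finset.univ : Finset (Fin n × Fin n)).filter fun pr =>
      pr.1 < pr.2 ∧ P pr.1 pr.2 = G pr.1 pr.2).card : ℝ) / ((n : ℝ) * ((n : ℝ) - 1) / 2)

/-- The set of correctly perceived ordered pairs. -/
def cntS (n : ℕ) (G P : Fin n → Fin n → Bool) : Finset (Fin n × Fin n) :=
  (Finset.univ : Finset (Fin n × Fin n)).filter fun pr =>
    pr.1 < pr.2 ∧ P pr.1 pr.2 = G pr.1 pr.2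

/-- Correct pairs involving `l`. -/
def lS (n : ℕ) (l : Fin n) (G P : Fin n → Fin n → Bool) : Finset (Fin n × Fin n) :=
  (Finset.univ : Finset (Fin n × Fin n)).filter fun pr =>
    (pr.1 < pr.2 ∧ P pr.1 pr.2 = G pr.1 pr.2) ∧ (pr.1 = l ∨ pr.2 = l)

/-- Correct pairs not involving `l`. -/
def oS (n : ℕ) (l : Fin n) (G P : Fin n → Fin n → Bool) : Finset (Fin n × Fin n) :=
  (Finset.univ : Finset (Fin n × Fin n)).filter fun pr =>
    (pr.1 < pr.2 ∧ P pr.1 pr.2 = G pr.1 pr.2) ∧ ¬ (pr.1 = l ∨ pr.2 = l)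

lemma cnt_split (n : ℕ) (l : Fin n) (G P : Fin n → Fin n → Bool) :
    (cntS n G P).card = (lS n l G P).card + (oS n l G P).card := by
  classical
  have h1 : lS n l G P = (cntS n G P).filter (fun pr => pr.1 = l ∨ pr.2 = l) := by
    rw [cntS, lS, Finset.filter_filter]
  have h2 : oS n l G P = (cntS n G P).filter (fun pr => ¬ (pr.1 = l ∨ pr.2 = l)) := by
    rw [cntS, oS, Finset.filter_filter]
  rw [h1, h2, Finset.card_filter_add_card_filter_not]

lemma acc_eq (n : ℕ) (G P : Fin n → Fin n → Bool) :
    acc n G P = ((cntS n G P).card : ℝ) / ((n : ℝ) * ((n : ℝ) - 1) / 2) := rfl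

lemma acc_le_acc_iff {n : ℕ} (hn : 3 ≤ n) (G : Fin n → Fin n → Bool)
    (P1 P2 : Fin n → Fin n → Bool) :
    acc n G P1 ≤ acc n G P2 ↔ (cntS n G P1).card ≤ (cntS n G P2).card := by
  have h3 : (3 : ℝ) ≤ (n : ℝ) := by exact_mod_cast hn
  have hM : (0 : ℝ) < (n : ℝ) * ((n : ℝ) - 1) / 2 := by nlinarith
  rw [acc_eq, acc_eq, div_le_div_iff_of_pos_right hM, Nat.cast_le]

theorem stmt4 (n : ℕ) (hn : 3 ≤ n) (l h : Fin n) (hlh : l ≠ h)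
    (G G' Ph P'l P'h : Fin n → Fin n → Bool)
    (hGsym : ∀ j k, G j k = G k j) (hGirr : ∀ i, G i i = false)
    (hG'sym : ∀ j k, G' j k = G' k j) (hG'irr : ∀ i, G' i i = false)
    (hPhsym : ∀ j k, Ph j k = Ph k j) (hPhirr : ∀ i, Ph i i = false)
    (hP'lsym : ∀ j k, P'l j k = P'l k j) (hP'lirr : ∀ i, P'l i i = false)
    (hP'hsym : ∀ j k, P'h j k = P'h k j) (hP'hirr : ∀ i, P'h i i = false)
    (hGlh : G l h = false)
    (hPhown : ∀ k, Ph h k = G h k)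
    (hmis : ∃ k, k ≠ l ∧ k ≠ h ∧ Ph l k ≠ G l k)
    (hG' : ∀ j k, G' j k = true ↔
      (G j k = true ∨ (j = l ∧ k = h) ∨ (j = h ∧ k = l)))
    (hP'loff : ∀ j k, j ≠ l → k ≠ l → P'l j k = Ph j k)
    (hP'lown : ∀ k, P'l l k = G' l k)
    (hP'hown : ∀ k, P'h h k = G' h k)
    (hP'hoff : ∀ j k, j ≠ h → k ≠ h → P'h j k = Ph j k) :
    (∀ (i : Fin n) (Pi : Fin n → Fin n → Bool), i ≠ l → i ≠ h →
      (∀ j k, Pi j k = Pi k j) → (∀ j, Pi j j = false) →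
      (∀ k, Pi i k = G i k) →
      acc n G Pi ≤ acc n G Ph →
      acc n G' Pi ≤ acc n G' P'l) ∧
    acc n G' P'h ≤ acc n G' P'l := by
  classical
  -- G' agrees with G except at the pair (l,h)/(h,l)
  have hG'ne : ∀ j k : Fin n, ¬ (j = l ∧ k = h) → ¬ (j = h ∧ k = l) → G' j k = G j k := by
    intro j k h1 h2
    have hiff := hG' j k
    cases hGv : G j k with
    | true => exact hiff.2 (Or.inl hGv)
    | false =>
      cases hG'v : G' j k with
      | false => rfl
      | true =>
        rcases hiff.1 hG'v with hg | hc | hc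
        · rw [hGv] at hg; exact absurd hg (by simp)
        · exact absurd hc h1
        · exact absurd hc h2
  -- P'h agrees with Ph off l (w.r.t. the pair not containing l)
  have hP'hoffl : ∀ j k : Fin n, j ≠ l → k ≠ l → P'h j k = Ph j k := by
    intro j k hj hk
    by_cases hjh : j = h
    · subst hjh
      rw [hP'hown k, hG'ne j k (fun hc => hj hc.1) (fun hc => hk hc.2), hPhown k]
    · by_cases hkh : k = h
      · subst hkh
        rw [hP'hsym j k, hP'hown j, hG'ne k j (fun hc => hk hc.1) (fun hc => hj hc.2),
          ← hPhown j, hPhsym k j]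
      · exact hP'hoff j k hjh hkh
  -- full set of l-pairs
  set Sfull : Finset (Fin n × Fin n) :=
    (Finset.univ : Finset (Fin n × Fin n)).filter fun pr =>
      pr.1 < pr.2 ∧ (pr.1 = l ∨ pr.2 = l) with hSfull
  -- the off-l parts coincide with those w.r.t. G, Ph
  have hoff_eq : ∀ P1 P2 : Fin n → Fin n → Bool,
      (∀ j k : Fin n, j ≠ l → k ≠ l → P1 j k = P2 j k) →
      oS n l G' P1 = oS n l G P2 := by
    intro P1 P2 hP
    unfold oS
    apply Finset.filter_congr
    intro pr _
    constructor
    · rintro ⟨⟨hlt, heq⟩, hnl⟩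
      push_neg at hnl
      refine ⟨⟨hlt, ?_⟩, by push_neg; exact hnl⟩
      rw [← hP pr.1 pr.2 hnl.1 hnl.2,
        ← hG'ne pr.1 pr.2 (fun hc => hnl.1 hc.1) (fun hc => hnl.2 hc.2)]
      exact heq
    · rintro ⟨⟨hlt, heq⟩, hnl⟩
      push_neg at hnl
      refine ⟨⟨hlt, ?_⟩, by push_neg; exact hnl⟩
      rw [hP pr.1 pr.2 hnl.1 hnl.2,
        hG'ne pr.1 pr.2 (fun hc => hnl.1 hc.1) (fun hc => hnl.2 hc.2)]
      exact heq
  have hoffP'l : oS n l G' P'l = oS n l G Ph := hoff_eq P'l Ph hP'loff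
  have hoffP'h : oS n l G' P'h = oS n l G Ph := hoff_eq P'h Ph hP'hoffl
  -- the l-part of P'l is everything
  have hlfull : lS n l G' P'l = Sfull := by
    unfold lS
    rw [hSfull]
    apply Finset.filter_congr
    intro pr _
    constructor
    · rintro ⟨⟨hlt, _⟩, hc⟩; exact ⟨hlt, hc⟩
    · rintro ⟨hlt, hc⟩
      refine ⟨⟨hlt, ?_⟩, hc⟩
      rcases hc with h1 | h2
      · rw [h1, hP'lown]
      · rw [h2, hP'lsym, hP'lown, hG'sym]
  -- l-part of any perception is within Sfull
  have hlsub : ∀ (Q P : Fin n → Fin n → Bool), lS n l Q P ⊆ Sfull := by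
    intro Q P pr hpr
    simp only [lS, Finset.mem_filter] at hpr
    simp only [hSfull, Finset.mem_filter]
    exact ⟨hpr.1, hpr.2.1.1, hpr.2.2⟩
  -- Ph errs on some l-pair: its l-part is strictly inside Sfull
  obtain ⟨k0, hk0l, hk0h, hk0⟩ := hmis
  have hlk0 : l ≠ k0 := fun e => hk0l e.symm
  set p1 : Fin n × Fin n := if l < k0 then (l, k0) else (k0, l) with hp1
  have hp1full : p1 ∈ Sfull := by
    rw [hSfull]
    refine Finset.mem_filter.2 ⟨Finset.mem_univ _, ?_⟩
    rcases lt_or_gt_of_ne hlk0 with hlt | hgt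
    · rw [hp1, if_pos hlt]; exact ⟨hlt, Or.inl rfl⟩
    · rw [hp1, if_neg (not_lt.2 hgt.le)]; exact ⟨hgt, Or.inr rfl⟩
  have hp1not : p1 ∉ lS n l G Ph := by
    intro hmem
    simp only [lS, Finset.mem_filter] at hmem
    rcases lt_or_gt_of_ne hlk0 with hlt | hgt
    · rw [hp1, if_pos hlt] at hmem
      exact hk0 hmem.2.1.2
    · rw [hp1, if_neg (not_lt.2 hgt.le)] at hmem
      apply hk0
      have := hmem.2.1.2
      rw [hPhsym k0 l] at this
      rw [this, hGsym]
  have hlPh : (lS n l G Ph).card + 1 ≤ Sfull.card := by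
    have hsub : lS n l G Ph ⊆ Sfull.erase p1 := by
      intro pr hpr
      refine Finset.mem_erase.2 ⟨?_, hlsub G Ph hpr⟩
      intro e; exact hp1not (e ▸ hpr)
    calc (lS n l G Ph).card + 1 ≤ (Sfull.erase p1).card + 1 :=
          Nat.add_le_add_right (Finset.card_le_card hsub) 1
      _ ≤ Sfull.card := by
          rw [Finset.card_erase_of_mem hp1full]
          have := Finset.card_pos.2 ⟨p1, hp1full⟩
          omega
  -- base count inequality machinery
  have hn3 : 3 ≤ n := hn
  constructor
  · intro i Pi hil hih hPisym hPiirr hPiown hacc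
    rw [acc_le_acc_iff hn] at hacc ⊢
    -- off-l part of Pi unchanged when passing from G to G'
    have hoffPi : oS n l G' Pi = oS n l G Pi := by
      unfold oS
      apply Finset.filter_congr
      intro pr _
      constructor
      · rintro ⟨⟨hlt, heq⟩, hnl⟩
        push_neg at hnl
        exact ⟨⟨hlt, by rw [← hG'ne pr.1 pr.2 (fun hc => hnl.1 hc.1)
            (fun hc => hnl.2 hc.2)]; exact heq⟩, by push_neg; exact hnl⟩
      · rintro ⟨⟨hlt, heq⟩, hnl⟩
        push_neg at hnl
        exact ⟨⟨hlt, by rw [hG'ne pr.1 pr.2 (fun hc => hnl.1 hc.1)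
            (fun hc => hnl.2 hc.2)]; exact heq⟩, by push_neg; exact hnl⟩
    -- l-part of Pi grows by at most 1 (only the (l,h) pair changes)
    set p0 : Fin n × Fin n := if l < h then (l, h) else (h, l) with hp0
    have hlPi : (lS n l G' Pi).card ≤ (lS n l G Pi).card + 1 := by
      have hsub : lS n l G' Pi ⊆ insert p0 (lS n l G Pi) := by
        intro pr hpr
        by_cases hp : pr = p0
        · exact Finset.mem_insert.2 (Or.inl hp)
        · refine Finset.mem_insert_of_mem ?_
          simp only [lS, Finset.mem_filter, Finset.mem_univ, true_and] at hpr ⊢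
          obtain ⟨⟨hlt, heq⟩, hc⟩ := hpr
          refine ⟨⟨hlt, ?_⟩, hc⟩
          rw [← hG'ne pr.1 pr.2 ?_ ?_]
          · exact heq
          · rintro ⟨h1, h2⟩
            apply hp
            have hlth : l < h := by rw [← h1, ← h2]; exact hlt
            rw [hp0, if_pos hlth]
            exact Prod.ext h1 h2
          · rintro ⟨h1, h2⟩
            apply hp
            have hhtl : h < l := by rw [← h1, ← h2]; exact hlt
            rw [hp0, if_neg (not_lt.2 hhtl.le)]
            exact Prod.ext h1 h2
      calc (lS n l G' Pi).card ≤ (insert p0 (lS n l G Pi)).card :=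
            Finset.card_le_card hsub
        _ ≤ (lS n l G Pi).card + 1 := Finset.card_insert_le _ _
    have hPiG : (cntS n G Pi).card = (lS n l G Pi).card + (oS n l G Pi).card :=
      cnt_split n l G Pi
    have hPhG : (cntS n G Ph).card = (lS n l G Ph).card + (oS n l G Ph).card :=
      cnt_split n l G Ph
    calc (cntS n G' Pi).card
        = (lS n l G' Pi).card + (oS n l G' Pi).card := cnt_split n l G' Pi
      _ = (lS n l G' Pi).card + (oS n l G Pi).card := by rw [hoffPi]
      _ ≤ ((lS n l G Pi).card + 1) + (oS n l G Pi).card :=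
          Nat.add_le_add_right hlPi _
      _ = (cntS n G Pi).card + 1 := by rw [hPiG]; ring
      _ ≤ (cntS n G Ph).card + 1 := Nat.add_le_add_right hacc 1
      _ = ((lS n l G Ph).card + 1) + (oS n l G Ph).card := by rw [hPhG]; ring
      _ ≤ Sfull.card + (oS n l G Ph).card := Nat.add_le_add_right hlPh _
      _ = (lS n l G' P'l).card + (oS n l G' P'l).card := by rw [hlfull, hoffP'l]
      _ = (cntS n G' P'l).card := (cnt_split n l G' P'l).symm
  · rw [acc_le_acc_iff hn]
    calc (cntS n G' P'h).card
        = (lS n l G' P'h).card + (oS n l G' P'h).card := cnt_split n l G' P'h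
      _ ≤ Sfull.card + (oS n l G Ph).card := by
          refine Nat.add_le_add (Finset.card_le_card (hlsub G' P'h)) ?_
          rw [hoffP'h]
      _ = (lS n l G' P'l).card + (oS n l G' P'l).card := by rw [hlfull, hoffP'l]
      _ = (cntS n G' P'l).card := (cnt_split n l G' P'l).symm
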